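/- Suppose the covering number of a function class F (with respect to the empirical L² norm on an n-point sample, functions taking values in [−V, V]) satisfies log N(ε, F, ‖·‖) ≤ 50 V⁶ ε⁻⁴ log(2n+2) for all 0 < ε ≤ V, where V ≥ 1. Then there is a universal constant C₁ ≥ 0 such that the empirical Rademacher complexity satisfies 𝓡ₙ(F) ≤ C₁ V³ √(log(2n+2)) / n^{1/4} · (appropriately, via the Dudley entropy integral bound 𝓡ₙ(F) ≤ inf_{0≤δ≤1/2} [4δ + (12/√n) ∫_δ^{V} √(log N(ε,F,‖·‖)) dε]). -/

import Mathlib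

set_option maxHeartbeats 1600000 in
/-- Dudley entropy-integral bound combined with the Anthony–Bartlett covering number
estimate for two-layer networks with 1-Lipschitz activation and weight bound `V`:
if `log N(ε) ≤ 50 V⁶ ε⁻⁴ log(2n+2)` for `0 < ε ≤ V` and the empirical Rademacher
complexity `R` satisfies the Dudley bound `R ≤ inf_{0≤δ≤1/2}[4δ + (12/√n)∫_δ^V √(log N)]`,
then `R ≤ C₁ V³ √(log(2n+2)) / n^(1/4)` for a universal constant `C₁ ≥ 0`. -/
theorem dudley_rademacher_bound :
    ∃ C₁ : ℝ, 0 ≤ C₁ ∧ ∀ (n : ℕ) (V : ℝ) (N : ℝ → ℝ) (R : ℝ),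
      1 ≤ n → 1 ≤ V →
      (∀ ε : ℝ, 0 < ε → ε ≤ V →
        Real.log (N ε) ≤ 50 * V ^ 6 / ε ^ 4 * Real.log (2 * n + 2)) →
      R ≤ ⨅ δ : Set.Icc (0:ℝ) (1/2),
          4 * (δ : ℝ) + 12 / Real.sqrt n *
            ∫ ε in (δ : ℝ)..V, Real.sqrt (Real.log (N ε)) →
      R ≤ C₁ * V ^ 3 * Real.sqrt (Real.log (2 * n + 2)) / (n : ℝ) ^ ((1:ℝ)/4) := by
  refine ⟨2 + 24 * Real.sqrt 50, by positivity, ?_⟩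
  intro n V N R hn hV hN hR
  set L := Real.log (2 * n + 2) with hLdef
  have hV0 : (0:ℝ) < V := lt_of_lt_of_le one_pos hV
  have hn1 : (1:ℝ) ≤ (n:ℝ) := by exact_mod_cast hn
  set t := (n:ℝ) ^ ((1:ℝ)/4) with htdef
  have ht : (1:ℝ) ≤ t := Real.one_le_rpow hn1 (by norm_num)
  have ht0 : (0:ℝ) < t := lt_of_lt_of_le one_pos ht
  have hL1 : 1 ≤ L := by
    have h9 : Real.exp 1 ≤ 2 * (n:ℝ) + 2 := by
      have := Real.exp_one_lt_d9
      nlinarith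
    calc (1:ℝ) = Real.log (Real.exp 1) := (Real.log_exp 1).symm
      _ ≤ L := Real.log_le_log (Real.exp_pos 1) h9
  have hL0 : (0:ℝ) ≤ L := le_trans zero_le_one hL1
  have hsL : 1 ≤ Real.sqrt L := by
    rw [show (1:ℝ) = Real.sqrt 1 from (Real.sqrt_one).symm]
    exact Real.sqrt_le_sqrt hL1
  set δ₀ : ℝ := 1 / (2 * t) with hδdef
  have hδ0 : (0:ℝ) < δ₀ := by positivity
  have hδhalf : δ₀ ≤ 1 / 2 := by
    rw [hδdef, div_le_div_iff₀ (by positivity) (by norm_num)]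
    nlinarith
  have hδV : δ₀ ≤ V := le_trans hδhalf (by linarith)
  -- step 1: R is at most the value at δ₀
  have key : R ≤ 4 * δ₀ + 12 / Real.sqrt n *
      ∫ ε in δ₀..V, Real.sqrt (Real.log (N ε)) := by
    refine le_trans hR (ciInf_le ?_ (⟨δ₀, hδ0.le, hδhalf⟩ : Set.Icc (0:ℝ) (1/2)))
    refine ⟨0, ?_⟩
    rintro x ⟨⟨δ, hδmem⟩, rfl⟩
    have hδV' : (δ:ℝ) ≤ V := le_trans hδmem.2 (by linarith)
    have hI : 0 ≤ ∫ ε in (δ:ℝ)..V, Real.sqrt (Real.log (N ε)) :=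
      intervalIntegral.integral_nonneg hδV' (fun u _ => Real.sqrt_nonneg _)
    have h1 : (0:ℝ) ≤ 12 / Real.sqrt n := by positivity
    have := hδmem.1
    simp only
    nlinarith
  -- step 2: bound the entropy integral
  set c := Real.sqrt (50 * V ^ 6 * L) with hcdef
  have hc0 : 0 ≤ c := Real.sqrt_nonneg _
  have hgcont : ContinuousOn (fun ε : ℝ => c / ε ^ 2) (Set.uIcc δ₀ V) := by
    apply ContinuousOn.div continuousOn_const (by fun_prop)
    intro x hx
    rw [Set.uIcc_of_le hδV] at hx
    have : 0 < x := lt_of_lt_of_le hδ0 hx.1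
    positivity
  have hgint : IntervalIntegrable (fun ε : ℝ => c / ε ^ 2) MeasureTheory.volume δ₀ V :=
    hgcont.intervalIntegrable
  have hpt : ∀ ε ∈ Set.Icc δ₀ V, Real.sqrt (Real.log (N ε)) ≤ c / ε ^ 2 := by
    intro ε hε
    have hε0 : 0 < ε := lt_of_lt_of_le hδ0 hε.1
    have h1 : Real.log (N ε) ≤ 50 * V ^ 6 / ε ^ 4 * L := hN ε hε0 hε.2
    have h2 : Real.sqrt (Real.log (N ε)) ≤ Real.sqrt (50 * V ^ 6 * L / ε ^ 4) := by
      apply Real.sqrt_le_sqrt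
      rw [show 50 * V ^ 6 * L / ε ^ 4 = 50 * V ^ 6 / ε ^ 4 * L by ring]
      exact h1
    refine h2.trans ?_
    rw [Real.sqrt_div (by positivity), hcdef]
    rw [show ε ^ 4 = (ε ^ 2) ^ 2 by ring, Real.sqrt_sq (by positivity)]
  have hIg : (∫ ε in δ₀..V, c / ε ^ 2) = c * (δ₀⁻¹ - V⁻¹) := by
    have h0 : (0:ℝ) ∉ Set.uIcc δ₀ V := by
      rw [Set.uIcc_of_le hδV]
      intro h
      exact absurd h.1 (not_le.mpr hδ0)
    have hz := integral_zpow (a := δ₀) (b := V) (n := -2) (Or.inr ⟨by norm_num, h0⟩)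
    have hrw : (∫ ε in δ₀..V, c / ε ^ 2) = c * ∫ ε in δ₀..V, (ε:ℝ) ^ (-2 : ℤ) := by
      rw [← intervalIntegral.integral_const_mul]
      apply intervalIntegral.integral_congr
      intro ε _
      show c / ε ^ 2 = c * (ε:ℝ) ^ (-2 : ℤ)
      have : (ε:ℝ) ^ (-2 : ℤ) = (ε ^ 2)⁻¹ := by
        rw [zpow_neg, show ((2:ℤ)) = ((2:ℕ):ℤ) from rfl, zpow_natCast]
      rw [this, ← div_eq_mul_inv]
    rw [hrw, hz]
    norm_num
    left
    ring
  have hint : (∫ ε in δ₀..V, Real.sqrt (Real.log (N ε))) ≤ c * (δ₀⁻¹ - V⁻¹) := by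
    rw [← hIg]
    by_cases hf : IntervalIntegrable (fun ε => Real.sqrt (Real.log (N ε)))
        MeasureTheory.volume δ₀ V
    · exact intervalIntegral.integral_mono_on hδV hf hgint hpt
    · rw [intervalIntegral.integral_undef hf]
      exact intervalIntegral.integral_nonneg hδV
        (fun u hu => le_trans (Real.sqrt_nonneg _) (hpt u hu))
  -- step 3: arithmetic
  have hceq : c = Real.sqrt 50 * V ^ 3 * Real.sqrt L := by
    rw [hcdef, Real.sqrt_mul (by positivity), Real.sqrt_mul (by norm_num),
      show V ^ 6 = (V ^ 3) ^ 2 by ring, Real.sqrt_sq (by positivity)]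
  have hsqrtn : Real.sqrt n = t ^ 2 := by
    rw [Real.sqrt_eq_rpow, htdef, ← Real.rpow_natCast ((n:ℝ) ^ ((1:ℝ)/4)) 2,
      ← Real.rpow_mul (by positivity)]
    norm_num
  have hdinv : δ₀⁻¹ = 2 * t := by
    rw [hδdef]; field_simp
  have hVinv : (0:ℝ) ≤ V⁻¹ := by positivity
  have h12 : (0:ℝ) ≤ 12 / Real.sqrt n := by positivity
  have step : R ≤ 4 * δ₀ + 12 / Real.sqrt n * (c * (δ₀⁻¹ - V⁻¹)) := by
    have := mul_le_mul_of_nonneg_left hint h12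
    linarith
  have hfin : 4 * δ₀ + 12 / Real.sqrt n * (c * (δ₀⁻¹ - V⁻¹)) ≤
      (2 + 24 * Real.sqrt 50) * V ^ 3 * Real.sqrt L / t := by
    rw [hsqrtn, hdinv, hδdef, hceq]
    have h1 : 12 / t ^ 2 * (Real.sqrt 50 * V ^ 3 * Real.sqrt L * (2 * t - V⁻¹)) ≤
        12 / t ^ 2 * (Real.sqrt 50 * V ^ 3 * Real.sqrt L * (2 * t)) := by
      have hpos : (0:ℝ) ≤ 12 / t ^ 2 := by positivity
      have ha : (0:ℝ) ≤ Real.sqrt 50 * V ^ 3 * Real.sqrt L := by positivity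
      have hb : 2 * t - V⁻¹ ≤ 2 * t := by linarith
      exact mul_le_mul_of_nonneg_left (mul_le_mul_of_nonneg_left hb ha) hpos
    have h1' : 4 * (1 / (2 * t)) + 12 / t ^ 2 *
          (Real.sqrt 50 * V ^ 3 * Real.sqrt L * (2 * t - V⁻¹)) ≤
        4 * (1 / (2 * t)) + 12 / t ^ 2 *
          (Real.sqrt 50 * V ^ 3 * Real.sqrt L * (2 * t)) := by linarith
    refine le_trans h1' ?_
    have h2 : 12 / t ^ 2 * (Real.sqrt 50 * V ^ 3 * Real.sqrt L * (2 * t)) =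
        24 * Real.sqrt 50 * V ^ 3 * Real.sqrt L / t := by
      field_simp; ring
    have h3 : 4 * (1 / (2 * t)) = 2 / t := by field_simp; ring
    rw [h2, h3]
    have hA : 1 ≤ V ^ 3 * Real.sqrt L := by nlinarith [pow_le_pow_left₀ (by norm_num : (0:ℝ) ≤ 1) hV 3]
    rw [show 2 / t + 24 * Real.sqrt 50 * V ^ 3 * Real.sqrt L / t
        = (2 + 24 * Real.sqrt 50 * (V ^ 3 * Real.sqrt L)) / t by ring,
      show (2 + 24 * Real.sqrt 50) * V ^ 3 * Real.sqrt L / t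
        = (2 * (V ^ 3 * Real.sqrt L) + 24 * Real.sqrt 50 * (V ^ 3 * Real.sqrt L)) / t by ring]
    have hle : 2 + 24 * Real.sqrt 50 * (V ^ 3 * Real.sqrt L) ≤
        2 * (V ^ 3 * Real.sqrt L) + 24 * Real.sqrt 50 * (V ^ 3 * Real.sqrt L) := by
      nlinarith [Real.sqrt_nonneg (50:ℝ)]
    exact div_le_div_of_nonneg_right hle ht0.le
  calc R ≤ 4 * δ₀ + 12 / Real.sqrt n * (c * (δ₀⁻¹ - V⁻¹)) := step
    _ ≤ (2 + 24 * Real.sqrt 50) * V ^ 3 * Real.sqrt L / t := hfin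
    _ = (2 + 24 * Real.sqrt 50) * V ^ 3 * Real.sqrt (Real.log (2 * n + 2)) /
        (n:ℝ) ^ ((1:ℝ)/4) := by rw [hLdef, htdef]
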